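/- Spherical Ceva theorem: if cevians AD, BE, CF of a spherical triangle ABC (with D on BC, E on CA, F on AB) meet at a common interior point, then (sin DB / sin DC) · (sin EC / sin EA) · (sin FA / sin FB) = 1. -/

import Mathlib

open Real

noncomputable section

/-- Angular (great-circle) distance between two points of the unit sphere in `ℝ³`. -/
def sphDist (x y : EuclideanSpace ℝ (Fin 3)) : ℝ :=
  Real.arccos (inner ℝ x y)

/-- The unit sphere `S² ⊂ ℝ³`. -/
def unitSphere : Set (EuclideanSpace ℝ (Fin 3)) :=
  Metric.sphere (0 : EuclideanSpace ℝ (Fin 3)) 1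

/-- `Y` lies strictly between `X` and `Z` on the minor great-circle arc `XZ`. -/
def SphBtw (X Y Z : EuclideanSpace ℝ (Fin 3)) : Prop :=
  Y ≠ X ∧ Y ≠ Z ∧ sphDist X Y + sphDist Y Z = sphDist X Z

lemma sphDist_comm (x y : EuclideanSpace ℝ (Fin 3)) : sphDist x y = sphDist y x := by
  unfold sphDist; rw [real_inner_comm]

lemma sph_repr (n X Y Z : EuclideanSpace ℝ (Fin 3))
    (hX : ‖X‖ = 1) (hY : ‖Y‖ = 1) (hZ : ‖Z‖ = 1)
    (hnX : (0:ℝ) < inner ℝ n X) (hnZ : (0:ℝ) < inner ℝ n Z)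
    (h : SphBtw X Y Z) :
    0 < Real.sin (sphDist X Y) ∧ 0 < Real.sin (sphDist Y Z) ∧
    0 < Real.sin (sphDist X Z) ∧
    Real.sin (sphDist X Z) • Y
      = Real.sin (sphDist Y Z) • X + Real.sin (sphDist X Y) • Z := by
  obtain ⟨hYX, hYZ, hsum⟩ := h
  set a := sphDist X Y with ha
  set b := sphDist Y Z with hb
  set c := sphDist X Z with hc
  have hXY1 : |(inner ℝ X Y : ℝ)| ≤ 1 := by
    simpa [hX, hY] using abs_real_inner_le_norm X Y
  have hYZ1 : |(inner ℝ Y Z : ℝ)| ≤ 1 := by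
    simpa [hY, hZ] using abs_real_inner_le_norm Y Z
  have hXZ1 : |(inner ℝ X Z : ℝ)| ≤ 1 := by
    simpa [hX, hZ] using abs_real_inner_le_norm X Z
  have hcosa : Real.cos a = inner ℝ X Y :=
    Real.cos_arccos (abs_le.mp hXY1).1 (abs_le.mp hXY1).2
  have hcosb : Real.cos b = inner ℝ Y Z :=
    Real.cos_arccos (abs_le.mp hYZ1).1 (abs_le.mp hYZ1).2
  have hcosc : Real.cos c = inner ℝ X Z :=
    Real.cos_arccos (abs_le.mp hXZ1).1 (abs_le.mp hXZ1).2
  have ha0 : 0 ≤ a := Real.arccos_nonneg _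
  have hb0 : 0 ≤ b := Real.arccos_nonneg _
  have hcπ : c ≤ π := Real.arccos_le_pi _
  have hane : a ≠ 0 := by
    intro h0
    have : Real.cos a = 1 := by rw [h0, Real.cos_zero]
    have : (inner ℝ X Y : ℝ) = 1 := by rw [← hcosa, this]
    exact hYX ((inner_eq_one_iff_of_norm_eq_one hX hY).mp this).symm
  have hbne : b ≠ 0 := by
    intro h0
    have : Real.cos b = 1 := by rw [h0, Real.cos_zero]
    have : (inner ℝ Y Z : ℝ) = 1 := by rw [← hcosb, this]
    exact hYZ ((inner_eq_one_iff_of_norm_eq_one hY hZ).mp this)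
  have hapos : 0 < a := lt_of_le_of_ne ha0 (Ne.symm hane)
  have hbpos : 0 < b := lt_of_le_of_ne hb0 (Ne.symm hbne)
  have hclt : c < π := by
    rcases lt_or_eq_of_le hcπ with h' | h'
    · exact h'
    · exfalso
      have hXZneg : (inner ℝ X Z : ℝ) = -1 := by
        have := Real.arccos_eq_pi.mp h'
        linarith [(abs_le.mp hXZ1).1]
      have hZX : Z = -X := by
        have hn : ‖Z - (-X)‖ ^ 2 = 0 := by
          rw [← real_inner_self_eq_norm_sq]
          simp only [inner_sub_left, inner_sub_right, inner_neg_left, inner_neg_right]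
          have h1 : (inner ℝ X X : ℝ) = 1 := by
            rw [real_inner_self_eq_norm_sq, hX]; norm_num
          have h2 : (inner ℝ Z Z : ℝ) = 1 := by
            rw [real_inner_self_eq_norm_sq, hZ]; norm_num
          have h3 : (inner ℝ Z X : ℝ) = -1 := by rw [real_inner_comm]; exact hXZneg
          rw [h1, h2, h3, hXZneg]; ring
        have h4 := pow_eq_zero_iff (n := 2) (by norm_num) |>.mp hn
        exact sub_eq_zero.mp (norm_eq_zero.mp h4)
      have : (0:ℝ) < inner ℝ n (-X) := hZX ▸ hnZ
      rw [inner_neg_right] at this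
      linarith
  have hc_ab : c = a + b := hsum.symm
  have hac : a < π := by linarith
  have hbc : b < π := by linarith
  have hsa : 0 < Real.sin a := Real.sin_pos_of_pos_of_lt_pi hapos hac
  have hsb : 0 < Real.sin b := Real.sin_pos_of_pos_of_lt_pi hbpos hbc
  have hsc : 0 < Real.sin c := Real.sin_pos_of_pos_of_lt_pi (by linarith) hclt
  refine ⟨hsa, hsb, hsc, ?_⟩
  have key : ‖Real.sin c • Y - (Real.sin b • X + Real.sin a • Z)‖ ^ 2 = 0 := by
    rw [← real_inner_self_eq_norm_sq]
    have hXX : (inner ℝ X X : ℝ) = 1 := by rw [real_inner_self_eq_norm_sq, hX]; norm_num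
    have hYY : (inner ℝ Y Y : ℝ) = 1 := by rw [real_inner_self_eq_norm_sq, hY]; norm_num
    have hZZ : (inner ℝ Z Z : ℝ) = 1 := by rw [real_inner_self_eq_norm_sq, hZ]; norm_num
    have hYX' : (inner ℝ Y X : ℝ) = Real.cos a := by rw [real_inner_comm]; exact hcosa.symm
    have hZY' : (inner ℝ Z Y : ℝ) = Real.cos b := by rw [real_inner_comm]; exact hcosb.symm
    have hZX' : (inner ℝ Z X : ℝ) = Real.cos c := by rw [real_inner_comm]; exact hcosc.symm
    simp only [inner_sub_left, inner_sub_right, inner_add_left, inner_add_right,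
      real_inner_smul_left, real_inner_smul_right]
    rw [hXX, hYY, hZZ, hYX', hZY', hZX', ← hcosa, ← hcosb, ← hcosc]
    rw [hc_ab, Real.sin_add, Real.cos_add]
    linear_combination (-(Real.sin a)^2) * Real.sin_sq_add_cos_sq b +
      (-(Real.sin b)^2) * Real.sin_sq_add_cos_sq a
  have k2 := pow_eq_zero_iff (n := 2) (by norm_num) |>.mp key
  exact sub_eq_zero.mp (norm_eq_zero.mp k2)

lemma uniq3 (A B C : EuclideanSpace ℝ (Fin 3)) (h : LinearIndependent ℝ ![A,B,C])
    {x y z x' y' z' : ℝ} (he : x•A + y•B + z•C = x'•A + y'•B + z'•C) :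
    x = x' ∧ y = y' ∧ z = z' := by
  have h0 : (x-x')•A + (y-y')•B + (z-z')•C = 0 := by
    simp only [sub_smul]; rw [← sub_eq_zero] at he; linear_combination (norm := module) he
  have := Fintype.linearIndependent_iff.mp h ![x-x', y-y', z-z'] (by
    simpa [Fin.sum_univ_three] using h0)
  have e0 := this 0; have e1 := this 1; have e2 := this 2
  simp only [Matrix.cons_val_zero, Matrix.cons_val_one, Matrix.head_cons,
    Matrix.cons_val_two, Matrix.tail_cons] at e0 e1 e2
  exact ⟨sub_eq_zero.mp e0, sub_eq_zero.mp e1, sub_eq_zero.mp e2⟩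

/-- Spherical Ceva theorem: if the cevians `AD`, `BE`, `CF` of a spherical triangle
`ABC` contained in an open hemisphere meet at a common interior point `O`, then
`(sin DB / sin DC)(sin EC / sin EA)(sin FA / sin FB) = 1`. -/
theorem spherical_ceva (A B C D E F O : EuclideanSpace ℝ (Fin 3))
    (hA : A ∈ unitSphere) (hB : B ∈ unitSphere) (hC : C ∈ unitSphere)
    (hD' : D ∈ unitSphere) (hE' : E ∈ unitSphere) (hF' : F ∈ unitSphere)
    (hO' : O ∈ unitSphere)
    (hhemi : ∃ n : EuclideanSpace ℝ (Fin 3),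
      (0:ℝ) < inner ℝ n A ∧ (0:ℝ) < inner ℝ n B ∧ (0:ℝ) < inner ℝ n C ∧
      (0:ℝ) < inner ℝ n D ∧ (0:ℝ) < inner ℝ n E ∧ (0:ℝ) < inner ℝ n F ∧ (0:ℝ) < inner ℝ n O)
    (hnd : LinearIndependent ℝ ![A, B, C])
    (hD : SphBtw B D C) (hE : SphBtw C E A) (hF : SphBtw A F B)
    (hOA : SphBtw A O D) (hOB : SphBtw B O E) (hOC : SphBtw C O F) :
    (Real.sin (sphDist D B) / Real.sin (sphDist D C)) *
      (Real.sin (sphDist E C) / Real.sin (sphDist E A)) *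
      (Real.sin (sphDist F A) / Real.sin (sphDist F B)) = 1 := by
  obtain ⟨n, hnA, hnB, hnC, hnD, hnE, hnF, hnO⟩ := hhemi
  have hA1 : ‖A‖ = 1 := by simpa [unitSphere] using hA
  have hB1 : ‖B‖ = 1 := by simpa [unitSphere] using hB
  have hC1 : ‖C‖ = 1 := by simpa [unitSphere] using hC
  have hD1 : ‖D‖ = 1 := by simpa [unitSphere] using hD'
  have hE1 : ‖E‖ = 1 := by simpa [unitSphere] using hE'
  have hF1 : ‖F‖ = 1 := by simpa [unitSphere] using hF'
  have hO1 : ‖O‖ = 1 := by simpa [unitSphere] using hO'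
  obtain ⟨pBD, pDC, pBC, eqD⟩ := sph_repr n B D C hB1 hD1 hC1 hnB hnC hD
  obtain ⟨pCE, pEA, pCA, eqE⟩ := sph_repr n C E A hC1 hE1 hA1 hnC hnA hE
  obtain ⟨pAF, pFB, pAB, eqF⟩ := sph_repr n A F B hA1 hF1 hB1 hnA hnB hF
  obtain ⟨pAO, pOD, pAD, eqOA⟩ := sph_repr n A O D hA1 hO1 hD1 hnA hnD hOA
  obtain ⟨pBO, pOE, pBE, eqOB⟩ := sph_repr n B O E hB1 hO1 hE1 hnB hnE hOB
  obtain ⟨pCO, pOF, pCF, eqOC⟩ := sph_repr n C O F hC1 hO1 hF1 hnC hnF hOC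
  set sBD := Real.sin (sphDist B D) with hsBD
  set sDC := Real.sin (sphDist D C) with hsDC
  set sBC := Real.sin (sphDist B C) with hsBC
  set sCE := Real.sin (sphDist C E) with hsCE
  set sEA := Real.sin (sphDist E A) with hsEA
  set sCA := Real.sin (sphDist C A) with hsCA
  set sAF := Real.sin (sphDist A F) with hsAF
  set sFB := Real.sin (sphDist F B) with hsFB
  set sAB := Real.sin (sphDist A B) with hsAB
  set sAO := Real.sin (sphDist A O) with hsAO
  set sOD := Real.sin (sphDist O D) with hsOD
  set sAD := Real.sin (sphDist A D) with hsAD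
  set sBO := Real.sin (sphDist B O) with hsBO
  set sOE := Real.sin (sphDist O E) with hsOE
  set sBE := Real.sin (sphDist B E) with hsBE
  set sCO := Real.sin (sphDist C O) with hsCO
  set sOF := Real.sin (sphDist O F) with hsOF
  set sCF := Real.sin (sphDist C F) with hsCF
  -- three representations of O in the basis A, B, C
  have h1 : (sBC*sAD) • O = (sBC*sOD) • A + (sAO*sDC) • B + (sAO*sBD) • C := by
    linear_combination (norm := module) sBC • eqOA + sAO • eqD
  have h2 : (sCA*sBE) • O = (sBO*sCE) • A + (sCA*sOE) • B + (sBO*sEA) • C := by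
    linear_combination (norm := module) sCA • eqOB + sBO • eqE
  have h3 : (sAB*sCF) • O = (sCO*sFB) • A + (sCO*sAF) • B + (sAB*sOF) • C := by
    linear_combination (norm := module) sAB • eqOC + sCO • eqF
  have g12 : ((sCA*sBE)*(sBC*sOD))•A + ((sCA*sBE)*(sAO*sDC))•B + ((sCA*sBE)*(sAO*sBD))•C
      = ((sBC*sAD)*(sBO*sCE))•A + ((sBC*sAD)*(sCA*sOE))•B + ((sBC*sAD)*(sBO*sEA))•C := by
    linear_combination (norm := module) (sBC*sAD) • h2 - (sCA*sBE) • h1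
  have g13 : ((sAB*sCF)*(sBC*sOD))•A + ((sAB*sCF)*(sAO*sDC))•B + ((sAB*sCF)*(sAO*sBD))•C
      = ((sBC*sAD)*(sCO*sFB))•A + ((sBC*sAD)*(sCO*sAF))•B + ((sBC*sAD)*(sAB*sOF))•C := by
    linear_combination (norm := module) (sBC*sAD) • h3 - (sAB*sCF) • h1
  obtain ⟨eA, eB, eC⟩ := uniq3 A B C hnd g12
  obtain ⟨fA, fB', fC⟩ := uniq3 A B C hnd g13
  -- scalar relations
  have Erel : sCE*(sAO*sBD) = sEA*(sBC*sOD) := by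
    have hk : (sBC*sAD)*sBO ≠ 0 :=
      ne_of_gt (mul_pos (mul_pos pBC pAD) pBO)
    apply mul_left_cancel₀ hk
    linear_combination (sBC*sOD) * eC - (sAO*sBD) * eA
  have Frel : sAF*(sBC*sOD) = sFB*(sAO*sDC) := by
    have hk : (sBC*sAD)*sCO ≠ 0 :=
      ne_of_gt (mul_pos (mul_pos pBC pAD) pCO)
    apply mul_left_cancel₀ hk
    linear_combination (sAO*sDC) * fA - (sBC*sOD) * fB'
  rw [sphDist_comm D B, sphDist_comm E C, sphDist_comm F A]
  rw [div_mul_div_comm, div_mul_div_comm, div_eq_one_iff_eq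
    (ne_of_gt (mul_pos (mul_pos pDC pEA) pFB))]
  apply mul_left_cancel₀ (ne_of_gt (mul_pos (mul_pos pAO pBD) (mul_pos pBC pOD)))
  linear_combination (sBC*sOD*sBD*sAF) * Erel + (sBD*sEA*(sBC*sOD)) * Frel

end
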